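/- Let ω = (ω_1,...,ω_k) be a basis of a subspace W ⊆ R^{1×ℓ}⟨x,x*⟩, I ⊆ R^{1×ℓ}⟨x,x*⟩ a left module, and Z = {C ∈ S^k : ω*Cω ∈ R^{ℓ×1}I + I*R^{1×ℓ}}. A symmetric matrix A ∈ S^k is the noncommutative Hankel matrix (L(ω_i*ω_j))_{i,j} of some symmetric linear functional L on W*W vanishing on (R^{ℓ×1}I + I*R^{1×ℓ}) ∩ W*W if and only if A ∈ Z^⊥; in that case L(ω*Cω) = Tr(AC) for every C ∈ ℝ^{k×k}. -/

import Mathlib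

open scoped BigOperators
open Matrix

namespace NSS

/-- Words in the `2g` free letters `x_1,…,x_g,x_1^*,…,x_g^*`
(a letter is a pair of an index and a `Bool`: `false` = unstarred, `true` = starred). -/
abbrev Word (g : ℕ) := FreeMonoid (Fin g × Bool)

/-- The free `*`-algebra `ℝ⟨x,x*⟩`. -/
abbrev NC (g : ℕ) := MonoidAlgebra ℝ (Word g)

/-- `ν × ℓ` matrices of noncommutative polynomials. -/
abbrev NCMat (g ν ℓ : ℕ) := Matrix (Fin ν) (Fin ℓ) (NC g)

/-- The involution on words: reverse the word and swap starred/unstarred letters. -/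
def wordStar {g : ℕ} (w : Word g) : Word g :=
  FreeMonoid.ofList (((FreeMonoid.toList w).map (fun p => (p.1, !p.2))).reverse)

/-- The involution on `ℝ⟨x,x*⟩`. -/
noncomputable def ncStar {g : ℕ} (p : NC g) : NC g :=
  MonoidAlgebra.ofCoeff (Finsupp.mapDomain wordStar (p.coeff : Word g →₀ ℝ))

/-- The involution on matrix polynomials: transpose and apply `ncStar` entrywise. -/
noncomputable def matStar {g ν ℓ : ℕ} (p : NCMat g ν ℓ) : NCMat g ℓ ν :=
  Matrix.of fun i j => ncStar (p j i)

/-- The left action of a scalar polynomial on a matrix polynomial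
(entrywise left multiplication, identifying `q` with `I ⊗ q`). -/
noncomputable def leftMul {g ν ℓ : ℕ} (q : NC g) (p : NCMat g ν ℓ) : NCMat g ν ℓ :=
  Matrix.of fun i j => q * p i j

/-- A constant real matrix, viewed as a matrix of noncommutative polynomials. -/
noncomputable def constMat {g m n : ℕ} (A : Matrix (Fin m) (Fin n) ℝ) : NCMat g m n :=
  A.map (algebraMap ℝ (NC g))

/-- The space `ℝ^{ℓ×1}·I + I^*·ℝ^{1×ℓ}`. -/
noncomputable def realPart {g ℓ : ℕ} (I : Set (NCMat g 1 ℓ)) : Submodule ℝ (NCMat g ℓ ℓ) :=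
  Submodule.span ℝ
    ({m | ∃ B : Matrix (Fin ℓ) (Fin 1) ℝ, ∃ a ∈ I, m = constMat B * a} ∪
     {m | ∃ B : Matrix (Fin 1) (Fin ℓ) ℝ, ∃ a ∈ I, m = matStar a * constMat B})

/-- Left `ℝ⟨x,x*⟩`-submodules of `ℝ^{1×ℓ}⟨x,x*⟩`. -/
def IsLeftSubmodule {g ℓ : ℕ} (I : Set (NCMat g 1 ℓ)) : Prop :=
  0 ∈ I ∧ (∀ a b, a ∈ I → b ∈ I → a + b ∈ I) ∧
    (∀ (r : ℝ) a, a ∈ I → r • a ∈ I) ∧ ∀ (q : NC g) a, a ∈ I → leftMul q a ∈ I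

/-- A left module `I` is *real* if any finite sum of hermitian squares lying in
`ℝ^{ℓ×1}·I + I^*·ℝ^{1×ℓ}` has all its terms in `I`. -/
def IsReal {g ℓ : ℕ} (I : Set (NCMat g 1 ℓ)) : Prop :=
  ∀ (n : ℕ) (p : Fin n → NCMat g 1 ℓ),
    (∑ i, matStar (p i) * p i) ∈ realPart I → ∀ i, p i ∈ I

/-- The monomial `e_j ⊗ w ∈ ℝ^{1×ℓ}⟨x,x*⟩`. -/
noncomputable def rowMono {g ℓ : ℕ} (j : Fin ℓ) (w : Word g) : NCMat g 1 ℓ :=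
  Matrix.of fun _ j' => if j' = j then (MonoidAlgebra.single w (1:ℝ) : NC g) else 0

/-- The left `ℝ⟨x,x*⟩`-submodule generated by a set. -/
def leftSpan {g ℓ : ℕ} (G : Set (NCMat g 1 ℓ)) : Set (NCMat g 1 ℓ) :=
  ⋂₀ {J | IsLeftSubmodule J ∧ G ⊆ J}


/-- `W*W`: the span of products `a*·b` with `a, b ∈ W = span(ω)`. -/
noncomputable def WW {g ℓ k : ℕ} (ω : Fin k → NCMat g 1 ℓ) : Submodule ℝ (NCMat g ℓ ℓ) :=
  Submodule.span ℝ
    {m | ∃ a ∈ Submodule.span ℝ (Set.range ω), ∃ b ∈ Submodule.span ℝ (Set.range ω),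
      m = matStar a * b}

lemma mem_WW {g ℓ k : ℕ} (ω : Fin k → NCMat g 1 ℓ) (i j : Fin k) :
    matStar (ω i) * ω j ∈ WW ω :=
  Submodule.subset_span
    ⟨ω i, Submodule.subset_span (Set.mem_range_self i),
     ω j, Submodule.subset_span (Set.mem_range_self j), rfl⟩

/-- `ω*Cω = Σ_{i,j} C i j • (ω_i* ω_j)`. -/
noncomputable def omegaC {g ℓ k : ℕ} (ω : Fin k → NCMat g 1 ℓ)
    (C : Matrix (Fin k) (Fin k) ℝ) : NCMat g ℓ ℓ :=
  ∑ i, ∑ j, C i j • (matStar (ω i) * ω j)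


section Aux

variable {g ℓ k : ℕ}

@[simp] lemma wordStar_one {g : ℕ} : wordStar (1 : Word g) = 1 := rfl

lemma wordStar_mul {g : ℕ} (u v : Word g) :
    wordStar (u * v) = wordStar v * wordStar u := by
  simp [wordStar, FreeMonoid.toList_mul, List.map_append, List.reverse_append,
    ← FreeMonoid.ofList_append]

lemma wordStar_involutive {g : ℕ} (w : Word g) : wordStar (wordStar w) = w := by
  simp [wordStar, List.map_reverse, List.map_map, Function.comp_def]

lemma ncStar_add {g : ℕ} (p q : NC g) : ncStar (p + q) = ncStar p + ncStar q :=
  congrArg MonoidAlgebra.ofCoeff Finsupp.mapDomain_add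

lemma ncStar_smul {g : ℕ} (r : ℝ) (p : NC g) : ncStar (r • p) = r • ncStar p :=
  congrArg MonoidAlgebra.ofCoeff (Finsupp.mapDomain_smul r p.coeff)

@[simp] lemma ncStar_zero {g : ℕ} : ncStar (0 : NC g) = 0 :=
  congrArg MonoidAlgebra.ofCoeff Finsupp.mapDomain_zero

lemma ncStar_single {g : ℕ} (w : Word g) (r : ℝ) :
    ncStar (MonoidAlgebra.single w r) = MonoidAlgebra.single (wordStar w) r :=
  congrArg MonoidAlgebra.ofCoeff Finsupp.mapDomain_single

lemma ncStar_involutive {g : ℕ} (p : NC g) : ncStar (ncStar p) = p := by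
  show MonoidAlgebra.ofCoeff (Finsupp.mapDomain wordStar (Finsupp.mapDomain wordStar p.coeff)) = p
  rw [← Finsupp.mapDomain_comp]
  have : wordStar ∘ wordStar = (id : Word g → Word g) := funext fun w => wordStar_involutive w
  simp only [this, Finsupp.mapDomain_id, MonoidAlgebra.ofCoeff_coeff]

lemma ncStar_mul {g : ℕ} (p q : NC g) : ncStar (p * q) = ncStar q * ncStar p := by
  induction p using MonoidAlgebra.induction_linear with
  | zero => simp [ncStar_zero]
  | add a b ha hb =>
    rw [add_mul, ncStar_add, ha, hb, ncStar_add, mul_add]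
  | single w r =>
    induction q using MonoidAlgebra.induction_linear with
    | zero => simp [ncStar_zero]
    | add a b ha hb =>
      rw [mul_add, ncStar_add, ha, hb, ncStar_add, add_mul]
    | single v s =>
      rw [MonoidAlgebra.single_mul_single, ncStar_single, ncStar_single, ncStar_single,
        MonoidAlgebra.single_mul_single, wordStar_mul, mul_comm s r]

lemma ncStar_algebraMap {g : ℕ} (r : ℝ) :
    ncStar (algebraMap ℝ (NC g) r) = algebraMap ℝ (NC g) r := by
  show ncStar (MonoidAlgebra.single 1 r) = MonoidAlgebra.single 1 r
  rw [ncStar_single, wordStar_one]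

lemma matStar_add {g ν μ : ℕ} (p q : NCMat g ν μ) :
    matStar (p + q) = matStar p + matStar q := by
  ext i j; simp [matStar, ncStar_add]

lemma matStar_smul {g ν μ : ℕ} (r : ℝ) (p : NCMat g ν μ) :
    matStar (r • p) = r • matStar p := by
  ext i j; simp [matStar, ncStar_smul]

@[simp] lemma matStar_zero {g ν μ : ℕ} : matStar (0 : NCMat g ν μ) = 0 := by
  ext i j; simp [matStar]

lemma matStar_involutive {g ν μ : ℕ} (p : NCMat g ν μ) : matStar (matStar p) = p := by
  ext i j; simp [matStar, ncStar_involutive]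

lemma ncStar_sum {g : ℕ} {α : Type*} [DecidableEq α] (s : Finset α) (f : α → NC g) :
    ncStar (∑ i ∈ s, f i) = ∑ i ∈ s, ncStar (f i) := by
  induction s using Finset.induction_on with
  | empty => simp
  | insert _ _ h ih => rw [Finset.sum_insert h, Finset.sum_insert h, ncStar_add, ih]

lemma matStar_mul {g ν μ ρ : ℕ} (p : NCMat g ν μ) (q : NCMat g μ ρ) :
    matStar (p * q) = matStar q * matStar p := by
  apply Matrix.ext; intro i j
  simp only [matStar, Matrix.mul_apply, Matrix.of_apply]
  rw [ncStar_sum]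
  exact Finset.sum_congr rfl fun m _ => by rw [ncStar_mul]

lemma matStar_constMat {g m n : ℕ} (B : Matrix (Fin m) (Fin n) ℝ) :
    matStar (constMat (g := g) B) = constMat Bᵀ := by
  apply Matrix.ext; intro i j
  show ncStar (algebraMap ℝ (NC g) (B j i)) = algebraMap ℝ (NC g) (B j i)
  exact ncStar_algebraMap _

end Aux


/-- `ω*Cω` as a linear map in `C`. -/
noncomputable def Phi {g ℓ k : ℕ} (ω : Fin k → NCMat g 1 ℓ) :
    Matrix (Fin k) (Fin k) ℝ →ₗ[ℝ] NCMat g ℓ ℓ where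
  toFun C := omegaC ω C
  map_add' C D := by
    simp [omegaC, Matrix.add_apply, add_smul, Finset.sum_add_distrib]
  map_smul' r C := by
    simp [omegaC, Matrix.smul_apply, smul_eq_mul, mul_smul, Finset.smul_sum]

/-- `C ↦ Tr(AC)` as a linear map. -/
noncomputable def psi {k : ℕ} (A : Matrix (Fin k) (Fin k) ℝ) :
    Matrix (Fin k) (Fin k) ℝ →ₗ[ℝ] ℝ where
  toFun C := (A * C).trace
  map_add' C D := by
    show (A * (C + D)).trace = (A * C).trace + (A * D).trace
    rw [Matrix.mul_add, Matrix.trace_add]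
  map_smul' r C := by
    show (A * (r • C)).trace = r • (A * C).trace
    rw [Matrix.mul_smul, Matrix.trace_smul]

/-- `matStar` as a linear map. -/
noncomputable def matStarL (g ν μ : ℕ) : NCMat g ν μ →ₗ[ℝ] NCMat g μ ν where
  toFun := matStar
  map_add' := matStar_add
  map_smul' := matStar_smul

lemma Phi_mem_WW {g ℓ k : ℕ} (ω : Fin k → NCMat g 1 ℓ) (C : Matrix (Fin k) (Fin k) ℝ) :
    Phi ω C ∈ WW ω := by
  show (∑ i, ∑ j, C i j • (matStar (ω i) * ω j)) ∈ WW ω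
  exact Submodule.sum_mem _ fun i _ => Submodule.sum_mem _ fun j _ =>
    Submodule.smul_mem _ _ (mem_WW ω i j)

lemma matStar_Phi {g ℓ k : ℕ} (ω : Fin k → NCMat g 1 ℓ) (C : Matrix (Fin k) (Fin k) ℝ) :
    matStar (Phi ω C) = Phi ω Cᵀ := by
  have h1 : ∀ i j : Fin k, matStar (C i j • (matStar (ω i) * ω j)) =
      C i j • (matStar (ω j) * ω i) := fun i j => by
    rw [matStar_smul, matStar_mul, matStar_involutive]
  calc matStar (Phi ω C) = ∑ i, ∑ j, matStar (C i j • (matStar (ω i) * ω j)) := by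
        show matStarL g ℓ ℓ (omegaC ω C) = _
        unfold omegaC
        rw [_root_.map_sum]
        exact Finset.sum_congr rfl fun i _ => _root_.map_sum _ _ _
    _ = ∑ i, ∑ j, C i j • (matStar (ω j) * ω i) := by
        exact Finset.sum_congr rfl fun i _ => Finset.sum_congr rfl fun j _ => h1 i j
    _ = Phi ω Cᵀ := by
        show _ = omegaC ω Cᵀ
        unfold omegaC
        rw [Finset.sum_comm]
        exact Finset.sum_congr rfl fun j _ => Finset.sum_congr rfl fun i _ => by
          rw [Matrix.transpose_apply]

lemma WW_le_range {g ℓ k : ℕ} (ω : Fin k → NCMat g 1 ℓ) :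
    WW ω ≤ LinearMap.range (Phi ω) := by
  rw [WW, Submodule.span_le]
  rintro m ⟨a, ha, b, hb, rfl⟩
  obtain ⟨s, hs⟩ := Submodule.mem_span_range_iff_exists_fun ℝ |>.1 ha
  obtain ⟨t, ht⟩ := Submodule.mem_span_range_iff_exists_fun ℝ |>.1 hb
  refine ⟨Matrix.of fun i j => s i * t j, ?_⟩
  show omegaC ω _ = matStar a * b
  rw [← hs, ← ht]
  have hsa : matStar (∑ i, s i • ω i) = ∑ i, s i • matStar (ω i) := by
    rw [show matStar (∑ i, s i • ω i) = matStarL g 1 ℓ (∑ i, s i • ω i) from rfl, _root_.map_sum]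
    exact Finset.sum_congr rfl fun i _ => matStar_smul _ _
  rw [hsa, Matrix.sum_mul]
  show (∑ i, ∑ j, (Matrix.of fun i j => s i * t j) i j • (matStar (ω i) * ω j)) = _
  refine Finset.sum_congr rfl fun i _ => ?_
  rw [Matrix.smul_mul, Matrix.mul_sum, Finset.smul_sum]
  refine Finset.sum_congr rfl fun j _ => ?_
  rw [Matrix.mul_smul, smul_smul]
  rfl

lemma realPart_matStar {g ℓ : ℕ} (I : Set (NCMat g 1 ℓ)) {w : NCMat g ℓ ℓ}
    (hw : w ∈ realPart I) : matStar w ∈ realPart I := by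
  induction hw using Submodule.span_induction with
  | mem x hx =>
    rcases hx with ⟨B, a, haI, rfl⟩ | ⟨B, a, haI, rfl⟩
    · have e := matStar_mul (constMat (g := g) B) a
      rw [matStar_constMat] at e
      refine (congrArg (fun x => x ∈ realPart I) e).mpr ?_
      exact Submodule.subset_span (Or.inr ⟨Bᵀ, a, haI, rfl⟩)
    · have e := matStar_mul (matStar a) (constMat (g := g) B)
      rw [matStar_constMat, matStar_involutive] at e
      refine (congrArg (fun x => x ∈ realPart I) e).mpr ?_
      exact Submodule.subset_span (Or.inl ⟨Bᵀ, a, haI, rfl⟩)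
  | zero => rw [matStar_zero]; exact Submodule.zero_mem _
  | add x y _ _ hx hy => rw [matStar_add]; exact Submodule.add_mem _ hx hy
  | smul r x _ hx => rw [matStar_smul]; exact Submodule.smul_mem _ _ hx

lemma trace_transpose_right {k : ℕ} {A : Matrix (Fin k) (Fin k) ℝ} (hA : Aᵀ = A)
    (C : Matrix (Fin k) (Fin k) ℝ) : (A * Cᵀ).trace = (A * C).trace := by
  rw [← Matrix.trace_transpose (A * Cᵀ), Matrix.transpose_mul, Matrix.transpose_transpose,
    Matrix.trace_mul_comm, hA]

lemma Phi_stdBasis {g ℓ k : ℕ} (ω : Fin k → NCMat g 1 ℓ) (i j : Fin k) :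
    Phi ω (Matrix.single i j (1 : ℝ)) = matStar (ω i) * ω j := by
  show omegaC ω _ = _
  unfold omegaC
  rw [Finset.sum_eq_single i]
  · rw [Finset.sum_eq_single j]
    · simp [Matrix.single]
    · intro b _ hb; simp [Matrix.single, hb.symm]
    · intro h; exact absurd (Finset.mem_univ j) h
  · intro b _ hb
    apply Finset.sum_eq_zero
    intro c _
    simp [Matrix.single, hb.symm]
  · intro h; exact absurd (Finset.mem_univ i) h

lemma trace_stdBasis {k : ℕ} (A : Matrix (Fin k) (Fin k) ℝ) (i j : Fin k) :
    (A * Matrix.single i j (1 : ℝ)).trace = A j i := by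
  simp [Matrix.trace, Matrix.diag, Matrix.mul_apply, Matrix.single, ite_and,
    Finset.sum_ite_eq, Finset.sum_ite_eq', mul_ite, mul_one, mul_zero]

/-- `A ∈ S^k` is the noncommutative Hankel matrix of some symmetric
linear functional `L` on `W*W` vanishing on `(ℝ^{ℓ×1}I + I*ℝ^{1×ℓ}) ∩ W*W` iff
`A ∈ Z^⊥`, where `Z = {C ∈ S^k : ω*Cω ∈ ℝ^{ℓ×1}I + I*ℝ^{1×ℓ}}`; and in that case
`L(ω*Cω) = Tr(AC)` for every `C`. -/
theorem stmt15 {g ℓ k : ℕ} (ω : Fin k → NCMat g 1 ℓ)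
    (hω : LinearIndependent ℝ ω)
    (I : Set (NCMat g 1 ℓ)) (hI : IsLeftSubmodule I)
    (A : Matrix (Fin k) (Fin k) ℝ) (hA : Aᵀ = A) :
    (∃ L : ↥(WW ω) →ₗ[ℝ] ℝ,
        (∀ (w : NCMat g ℓ ℓ) (h1 : w ∈ WW ω) (h2 : matStar w ∈ WW ω),
          L ⟨matStar w, h2⟩ = L ⟨w, h1⟩) ∧
        (∀ (w : NCMat g ℓ ℓ) (h1 : w ∈ WW ω), w ∈ realPart I → L ⟨w, h1⟩ = 0) ∧
        (∀ i j : Fin k, L ⟨matStar (ω i) * ω j, mem_WW ω i j⟩ = A i j) ∧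
        (∀ (C : Matrix (Fin k) (Fin k) ℝ) (hC : omegaC ω C ∈ WW ω),
          L ⟨omegaC ω C, hC⟩ = (A * C).trace)) ↔
      ∀ C : Matrix (Fin k) (Fin k) ℝ, Cᵀ = C →
        omegaC ω C ∈ realPart I → (A * C).trace = 0 := by
  constructor
  · rintro ⟨L, hsym, hvan, hij, htr⟩ C hCs hCr
    have hCW : omegaC ω C ∈ WW ω := Phi_mem_WW ω C
    rw [← htr C hCW]
    exact hvan _ hCW hCr
  · intro hZ
    have hle : WW ω ≤ LinearMap.range (Phi ω) := WW_le_range ω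
    have htrt := trace_transpose_right hA
    have hker : LinearMap.ker (Phi ω) ≤ LinearMap.ker (psi A) := by
      intro C hC
      rw [LinearMap.mem_ker] at hC ⊢
      have hS : Phi ω ((1/2 : ℝ) • (C + Cᵀ)) = 0 := by
        rw [_root_.map_smul, _root_.map_add, hC, ← matStar_Phi, hC, matStar_zero, add_zero, smul_zero]
      have hSs : ((1/2 : ℝ) • (C + Cᵀ))ᵀ = (1/2 : ℝ) • (C + Cᵀ) := by
        rw [Matrix.transpose_smul, Matrix.transpose_add, Matrix.transpose_transpose, add_comm]
      have h0 : omegaC ω ((1/2 : ℝ) • (C + Cᵀ)) ∈ realPart I := by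
        show Phi ω _ ∈ realPart I
        rw [hS]; exact Submodule.zero_mem _
      have := hZ _ hSs h0
      rw [Matrix.mul_smul, Matrix.trace_smul, Matrix.mul_add, Matrix.trace_add, htrt C,
        smul_eq_mul] at this
      show (A * C).trace = 0
      linarith
    let L : ↥(WW ω) →ₗ[ℝ] ℝ :=
      ((LinearMap.ker (Phi ω)).liftQ (psi A) hker) ∘ₗ
        ((Phi ω).quotKerEquivRange.symm.toLinearMap) ∘ₗ (Submodule.inclusion hle)
    have key : ∀ (C : Matrix (Fin k) (Fin k) ℝ) (h : Phi ω C ∈ WW ω),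
        L ⟨Phi ω C, h⟩ = (A * C).trace := by
      intro C h
      show ((LinearMap.ker (Phi ω)).liftQ (psi A) hker)
        ((Phi ω).quotKerEquivRange.symm ⟨Phi ω C, hle h⟩) = _
      rw [LinearMap.quotKerEquivRange_symm_apply_image, Submodule.mkQ_apply,
        Submodule.liftQ_apply]
      rfl
    refine ⟨L, ?_, ?_, ?_, ?_⟩
    · intro w h1 h2
      obtain ⟨C, rfl⟩ := hle h1
      have h2' : Phi ω Cᵀ ∈ WW ω := Phi_mem_WW ω Cᵀ
      have he : (⟨matStar (Phi ω C), h2⟩ : ↥(WW ω)) = ⟨Phi ω Cᵀ, h2'⟩ :=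
        Subtype.ext (matStar_Phi ω C)
      rw [he, key Cᵀ h2', key C h1, htrt C]
    · intro w h1 hreal
      obtain ⟨C, rfl⟩ := hle h1
      rw [key C h1]
      have hstar : Phi ω Cᵀ ∈ realPart I := by
        rw [← matStar_Phi]; exact realPart_matStar I hreal
      have hS : Phi ω ((1/2 : ℝ) • (C + Cᵀ)) ∈ realPart I := by
        rw [_root_.map_smul, _root_.map_add]
        exact Submodule.smul_mem _ _ (Submodule.add_mem _ hreal hstar)
      have hSs : ((1/2 : ℝ) • (C + Cᵀ))ᵀ = (1/2 : ℝ) • (C + Cᵀ) := by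
        rw [Matrix.transpose_smul, Matrix.transpose_add, Matrix.transpose_transpose, add_comm]
      have := hZ _ hSs hS
      rw [Matrix.mul_smul, Matrix.trace_smul, Matrix.mul_add, Matrix.trace_add, htrt C,
        smul_eq_mul] at this
      linarith
    · intro i j
      have hW : Phi ω (Matrix.single i j (1 : ℝ)) ∈ WW ω := Phi_mem_WW ω _
      have he : (⟨matStar (ω i) * ω j, mem_WW ω i j⟩ : ↥(WW ω)) =
          ⟨Phi ω (Matrix.single i j (1 : ℝ)), hW⟩ :=
        Subtype.ext (Phi_stdBasis ω i j).symm
      rw [he, key _ hW, trace_stdBasis]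
      exact congrFun (congrFun hA i) j
    · intro C hC
      exact key C hC


end NSS
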